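/- For every k ≥ 2 the operations Δ_2, Δ_3, … on M (the mod-2 chains/homology of a closed compact orientable surface of genus g, with zero differential) satisfy the A∞-coalgebra relation in arity k, i.e. Σ_{i=1}^{k−2} Σ_{j=0}^{k−i−1} (1^{⊗j} ⊗ Δ_{i+1} ⊗ 1^{⊗(k−i−j−1)}) ∘ Δ_{k−i} = 0 on M; thus (M, 0, Δ_2, Δ_3, …) is an A∞-coalgebra over ℤ/2ℤ. -/

import Mathlib

noncomputable section

/-- Generators of the mod-2 chains/homology of the closed orientable surface of genus `g`:
the vertex `v` (degree 0), edges `e i` modelling `e_{i+1}` (degree 1, 0-based indices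
`i : Fin (2*g)`), and the 2-dimensional class `X` (degree 2). -/
inductive OCell (g : ℕ) : Type where
  | v : OCell g
  | e : Fin (2 * g) → OCell g
  | X : OCell g
deriving DecidableEq

/-- `TO g k` models `M^{⊗k}`: the free `ℤ/2ℤ`-module on `k`-tuples of generators. -/
abbrev TO (g k : ℕ) : Type := (Fin k → OCell g) →₀ ZMod 2

/-- The involution `e ↦ ê` on edge indices: `ê_{2t−1} = e_{2t}`, `ê_{2t} = e_{2t−1}`
(0-based: even and odd indices are swapped in pairs). -/
def hatO {g : ℕ} (m : Fin (2 * g)) : Fin (2 * g) :=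
  if h : (m : ℕ) % 2 = 0 then ⟨(m : ℕ) + 1, by have := m.isLt; omega⟩
  else ⟨(m : ℕ) - 1, by have := m.isLt; omega⟩

/-- The `A_∞`-coalgebra operations on the generators: `Δ₂(v) = v ⊗ v`,
`Δ₂(e_i) = v ⊗ e_i + e_i ⊗ v`,
`Δ₂(X) = v ⊗ X + X ⊗ v + Σ_{i=1}^{g} (e_{2i−1} ⊗ e_{2i} + e_{2i} ⊗ e_{2i−1})`; for `k ≥ 3`,
`Δ_k` vanishes on `v` and on each `e_i` and
`Δ_k(X) = Σ_{0<i₁<⋯<i_k≤2g} (e_{i₁} ⊗ ⋯ ⊗ e_{i_k} + ê_{i₁} ⊗ ⋯ ⊗ ê_{i_k})`. -/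
def DeltaOB (g : ℕ) (k : ℕ) : OCell g → TO g k
  | .v => if k = 2 then Finsupp.single (fun _ => OCell.v) 1 else 0
  | .e i =>
      if k = 2 then
        Finsupp.single (fun p : Fin k => if (p : ℕ) = 0 then OCell.v else OCell.e i) 1 +
          Finsupp.single (fun p : Fin k => if (p : ℕ) = 0 then OCell.e i else OCell.v) 1
      else 0
  | .X =>
      if k = 2 then
        Finsupp.single (fun p : Fin k => if (p : ℕ) = 0 then OCell.v else OCell.X) 1 +
          Finsupp.single (fun p : Fin k => if (p : ℕ) = 0 then OCell.X else OCell.v) 1 +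
          ∑ i : Fin g,
            (Finsupp.single (fun p : Fin k =>
                if (p : ℕ) = 0 then OCell.e ⟨2 * (i : ℕ), by have := i.isLt; omega⟩
                else OCell.e ⟨2 * (i : ℕ) + 1, by have := i.isLt; omega⟩) 1 +
              Finsupp.single (fun p : Fin k =>
                if (p : ℕ) = 0 then OCell.e ⟨2 * (i : ℕ) + 1, by have := i.isLt; omega⟩
                else OCell.e ⟨2 * (i : ℕ), by have := i.isLt; omega⟩) 1)
      else
        ∑ f : Fin k → Fin (2 * g),
          if ∀ a b : Fin k, a < b → f a < f b then
            Finsupp.single (fun q : Fin k => OCell.e (f q)) 1 +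
              Finsupp.single (fun q : Fin k => OCell.e (hatO (f q))) 1
          else 0

/-- Splicing a `j`-tuple into a `k`-tuple at position `a`, producing an `m`-tuple
(meaningful when `m = k + j - 1` and `a < k`). -/
def spliceO {g k j : ℕ} (m a : ℕ) (x : Fin k → OCell g) (y : Fin j → OCell g) :
    Fin m → OCell g := fun q =>
  if h1 : (q : ℕ) < a ∧ (q : ℕ) < k then x ⟨q, h1.2⟩
  else if h2 : a ≤ (q : ℕ) ∧ (q : ℕ) - a < j then y ⟨(q : ℕ) - a, h2.2⟩
  else if h3 : (q : ℕ) + 1 - j < k then x ⟨(q : ℕ) + 1 - j, h3⟩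
  else OCell.v

/-- `oppO g k m j a D` is the linear map `1^{⊗a} ⊗ D ⊗ 1^{⊗(k-1-a)} : M^{⊗k} → M^{⊗m}`
(meaningful when `m = k + j - 1`), where `D` is the basis-level description of an operation
`M → M^{⊗j}`; over `ℤ/2ℤ` Koszul signs are irrelevant. -/
def oppO (g k m j a : ℕ) (D : OCell g → TO g j) : TO g k →ₗ[ZMod 2] TO g m :=
  Finsupp.linearCombination (ZMod 2) fun x : Fin k → OCell g =>
    if ha : a < k then Finsupp.mapDomain (spliceO m a x) (D (x ⟨a, ha⟩)) else 0

/-- `Δ_k` as a linear map `M → M^{⊗k}`. -/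
def DmapO (g k : ℕ) : TO g 1 →ₗ[ZMod 2] TO g k :=
  Finsupp.linearCombination (ZMod 2) fun x : Fin 1 → OCell g => DeltaOB g k (x 0)

end

noncomputable section AuxAinf
open Finsupp

variable {g : ℕ}

lemma add_self_TO {k : ℕ} (a : TO g k) : a + a = 0 := by
  have h : a + a = (2 : ZMod 2) • a := (two_smul _ a).symm
  rw [h, show (2 : ZMod 2) = 0 from rfl, zero_smul]

lemma neg_TO {k : ℕ} (a : TO g k) : -a = a :=
  neg_eq_of_add_eq_zero_left (add_self_TO a)

lemma oppO_single (k m j a : ℕ) (D : OCell g → TO g j) (y : Fin k → OCell g) :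
    oppO g k m j a D (Finsupp.single y 1) =
      if h : a < k then Finsupp.mapDomain (spliceO m a y) (D (y ⟨a, h⟩)) else 0 := by
  simp [oppO, Finsupp.linearCombination_single]

def insV {g : ℕ} {m : ℕ} (f : Fin m → Fin (2 * g)) (p : ℕ) : Fin (m + 1) → OCell g :=
  fun q =>
    if hq : (q : ℕ) < p ∧ (q : ℕ) < m then OCell.e (f ⟨q, hq.2⟩)
    else if (q : ℕ) = p then OCell.v
    else if h : (q : ℕ) - 1 < m then OCell.e (f ⟨(q : ℕ) - 1, h⟩) else OCell.v

lemma splice_pairA {m : ℕ} (f : Fin m → Fin (2 * g)) (j : ℕ) (hj : j < m) :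
    spliceO (m + 1) j (fun q : Fin m => OCell.e (f q))
      (fun p : Fin 2 => if (p : ℕ) = 0 then OCell.v else OCell.e (f ⟨j, hj⟩)) = insV f j := by
  funext q
  have hq := q.isLt
  simp only [spliceO, insV]
  split_ifs with h1 h2 h3 h4 h5 h6 h7 h8 h9 h10
  all_goals try rfl
  all_goals try omega
  all_goals exact congrArg (fun t => OCell.e (f t)) (Fin.ext (by simp only [Fin.val_mk]; omega))


lemma splice_pairB {m : ℕ} (f : Fin m → Fin (2 * g)) (j : ℕ) (hj : j < m) :
    spliceO (m + 1) j (fun q : Fin m => OCell.e (f q))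
      (fun p : Fin 2 => if (p : ℕ) = 0 then OCell.e (f ⟨j, hj⟩) else OCell.v) =
      insV f (j + 1) := by
  funext q
  have hq := q.isLt
  simp only [spliceO, insV]
  split_ifs <;>
    first
      | rfl
      | omega
      | exact congrArg (fun t => OCell.e (f t)) (Fin.ext (by simp only [Fin.val_mk]; omega))

lemma splice_vX {m : ℕ} (f : Fin m → Fin (2 * g)) :
    spliceO (m + 1) 1 (fun p : Fin 2 => if (p : ℕ) = 0 then OCell.v else OCell.X)
      (fun q : Fin m => OCell.e (f q)) = insV f 0 := by
  funext q
  have hq := q.isLt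
  simp only [spliceO, insV]
  split_ifs <;>
    first
      | rfl
      | omega
      | (simp only [Fin.val_mk]; omega)
      | exact congrArg (fun t => OCell.e (f t)) (Fin.ext (by simp only [Fin.val_mk]; omega))
      | (simp only [Fin.val_mk]
         split <;> first | rfl | omega)

lemma splice_Xv {m : ℕ} (f : Fin m → Fin (2 * g)) :
    spliceO (m + 1) 0 (fun p : Fin 2 => if (p : ℕ) = 0 then OCell.X else OCell.v)
      (fun q : Fin m => OCell.e (f q)) = insV f m := by
  funext q
  have hq := q.isLt
  simp only [spliceO, insV]
  split_ifs <;>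
    first
      | rfl
      | omega
      | (simp only [Fin.val_mk]; omega)
      | exact congrArg (fun t => OCell.e (f t)) (Fin.ext (by simp only [Fin.val_mk]; omega))
      | (simp only [Fin.val_mk]
         split <;> first | rfl | omega)


lemma mapDomain_fsum {α β ι : Type*} (h : α → β) (s : Finset ι) (F : ι → α →₀ ZMod 2) :
    Finsupp.mapDomain h (∑ i ∈ s, F i) = ∑ i ∈ s, Finsupp.mapDomain h (F i) :=
  map_sum (Finsupp.mapDomain.addMonoidHom h) F s

lemma tele {k : ℕ} (M : ℕ) (F : ℕ → TO g k) :
    ∑ j ∈ Finset.range M, (F j + F (j + 1)) = F 0 + F M := by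
  have h : ∀ j, F j + F (j + 1) = F (j + 1) - F j := fun j => by
    rw [sub_eq_add_neg, neg_TO, add_comm]
  simp only [h]
  rw [Finset.sum_range_sub, sub_eq_add_neg, neg_TO, add_comm]

def WtO {M : ℕ} (f : Fin M → Fin (2 * g)) : TO g (M + 1) :=
  (Finsupp.single (insV f 0) 1 + Finsupp.single (insV f M) 1) +
    (Finsupp.single (insV (fun q => hatO (f q)) 0) 1 +
      Finsupp.single (insV (fun q => hatO (f q)) M) 1)

lemma opp2_edge {M : ℕ} (f : Fin M → Fin (2 * g)) (j : ℕ) (hj : j < M) :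
    oppO g M (M + 1) 2 j (DeltaOB g 2) (Finsupp.single (fun q : Fin M => OCell.e (f q)) 1) =
      Finsupp.single (insV f j) 1 + Finsupp.single (insV f (j + 1)) 1 := by
  rw [oppO_single, dif_pos hj]
  have h1 : DeltaOB g 2 ((fun q : Fin M => OCell.e (f q)) ⟨j, hj⟩) =
      Finsupp.single (fun p : Fin 2 => if (p : ℕ) = 0 then OCell.v
        else OCell.e (f ⟨j, hj⟩)) 1 +
      Finsupp.single (fun p : Fin 2 => if (p : ℕ) = 0 then OCell.e (f ⟨j, hj⟩)
        else OCell.v) 1 := by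
    simp [DeltaOB]
  rw [h1, Finsupp.mapDomain_add, Finsupp.mapDomain_single, Finsupp.mapDomain_single,
    splice_pairA f j hj, splice_pairB f j hj]


lemma DeltaX_big {M : ℕ} (hM : M ≠ 2) :
    DeltaOB g M OCell.X =
      ∑ f : Fin M → Fin (2 * g),
        if ∀ a b : Fin M, a < b → f a < f b then
          Finsupp.single (fun q : Fin M => OCell.e (f q)) 1 +
            Finsupp.single (fun q : Fin M => OCell.e (hatO (f q))) 1
        else 0 := by
  simp only [DeltaOB, if_neg hM]

lemma T1_eq (M : ℕ) (hM : M ≠ 2) :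
    ∑ j ∈ Finset.range M, oppO g M (M + 1) 2 j (DeltaOB g 2) (DeltaOB g M OCell.X) =
      ∑ f : Fin M → Fin (2 * g),
        if ∀ a b : Fin M, a < b → f a < f b then WtO f else 0 := by
  rw [DeltaX_big hM]
  calc
    ∑ j ∈ Finset.range M, oppO g M (M + 1) 2 j (DeltaOB g 2)
        (∑ f : Fin M → Fin (2 * g),
          if ∀ a b : Fin M, a < b → f a < f b then
            Finsupp.single (fun q : Fin M => OCell.e (f q)) 1 +
              Finsupp.single (fun q : Fin M => OCell.e (hatO (f q))) 1
          else 0)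
      = ∑ f : Fin M → Fin (2 * g), ∑ j ∈ Finset.range M,
          oppO g M (M + 1) 2 j (DeltaOB g 2)
            (if ∀ a b : Fin M, a < b → f a < f b then
              Finsupp.single (fun q : Fin M => OCell.e (f q)) 1 +
                Finsupp.single (fun q : Fin M => OCell.e (hatO (f q))) 1
              else 0) := by
        rw [Finset.sum_comm]
        exact Finset.sum_congr rfl fun j _ => map_sum _ _ _
    _ = ∑ f : Fin M → Fin (2 * g),
          if ∀ a b : Fin M, a < b → f a < f b then WtO f else 0 := by
        refine Finset.sum_congr rfl fun f _ => ?_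
        split_ifs with hf
        · have hstep : ∀ j ∈ Finset.range M,
              oppO g M (M + 1) 2 j (DeltaOB g 2)
                (Finsupp.single (fun q : Fin M => OCell.e (f q)) 1 +
                  Finsupp.single (fun q : Fin M => OCell.e (hatO (f q))) 1) =
              ((Finsupp.single (insV f j) 1 + Finsupp.single (insV f (j + 1)) 1) +
                (Finsupp.single (insV (fun q => hatO (f q)) j) 1 +
                  Finsupp.single (insV (fun q => hatO (f q)) (j + 1)) 1)) := by
            intro j hj
            rw [map_add, opp2_edge f j (Finset.mem_range.mp hj),
              opp2_edge (fun q => hatO (f q)) j (Finset.mem_range.mp hj)]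
          rw [Finset.sum_congr rfl hstep, Finset.sum_add_distrib,
            tele M (fun p => Finsupp.single (insV f p) 1),
            tele M (fun p => Finsupp.single (insV (fun q => hatO (f q)) p) 1)]
          rfl
        · simp only [map_zero, Finset.sum_const_zero]


lemma Delta_ne2_v {I : ℕ} (hI : I ≠ 2) : DeltaOB g I OCell.v = 0 := by
  simp [DeltaOB, hI]

lemma Delta_ne2_e {I : ℕ} (hI : I ≠ 2) (i : Fin (2 * g)) : DeltaOB g I (OCell.e i) = 0 := by
  simp [DeltaOB, hI]

lemma middle_zero (K M I jj : ℕ) (hM : M ≠ 2) (hI : I ≠ 2) :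
    oppO g M K I jj (DeltaOB g I) (DeltaOB g M OCell.X) = 0 := by
  rw [DeltaX_big hM, map_sum]
  refine Finset.sum_eq_zero fun f _ => ?_
  split_ifs with hf
  · rw [map_add, oppO_single, oppO_single]
    split_ifs with h <;> simp [Delta_ne2_e hI]
  · rw [map_zero]

lemma cell_zero (K M I jj : ℕ) (h2 : M = 2 → I ≠ 2) (hne : M ≠ 2 → True) (c : OCell g)
    (hc : c ≠ OCell.X) :
    oppO g M K I jj (DeltaOB g I) (DeltaOB g M c) = 0 := by
  by_cases hM : M = 2
  · subst hM
    have hI := h2 rfl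
    cases c with
    | v =>
        have hv : DeltaOB g 2 (OCell.v : OCell g) =
            Finsupp.single (fun _ : Fin 2 => OCell.v) 1 := by simp [DeltaOB]
        rw [hv, oppO_single]
        split_ifs with h <;> simp [Delta_ne2_v hI]
    | e i =>
        have he : DeltaOB g 2 (OCell.e i : OCell g) =
            Finsupp.single (fun p : Fin 2 => if (p : ℕ) = 0 then OCell.v else OCell.e i) 1 +
              Finsupp.single
                (fun p : Fin 2 => if (p : ℕ) = 0 then OCell.e i else OCell.v) 1 := by
          simp [DeltaOB]
        rw [he, map_add, oppO_single, oppO_single]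
        split_ifs with h <;> simp [Delta_ne2_v hI, Delta_ne2_e hI]
    | X => exact absurd rfl hc
  · cases c with
    | v => rw [show DeltaOB g M (OCell.v : OCell g) = 0 from Delta_ne2_v hM, map_zero]
    | e i => rw [Delta_ne2_e hM i, map_zero]
    | X => exact absurd rfl hc


lemma DeltaX_2' :
    DeltaOB g 2 (OCell.X : OCell g) =
      Finsupp.single (fun p : Fin 2 => if (p : ℕ) = 0 then OCell.v else OCell.X) 1 +
        Finsupp.single (fun p : Fin 2 => if (p : ℕ) = 0 then OCell.X else OCell.v) 1 +
        ∑ i : Fin g,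
          (Finsupp.single (fun p : Fin 2 =>
              if (p : ℕ) = 0 then OCell.e ⟨2 * (i : ℕ), by have := i.isLt; omega⟩
              else OCell.e ⟨2 * (i : ℕ) + 1, by have := i.isLt; omega⟩) 1 +
            Finsupp.single (fun p : Fin 2 =>
              if (p : ℕ) = 0 then OCell.e ⟨2 * (i : ℕ) + 1, by have := i.isLt; omega⟩
              else OCell.e ⟨2 * (i : ℕ), by have := i.isLt; omega⟩) 1) := by
  simp [DeltaOB]

lemma T2_piece_vX (M : ℕ) (hM : M ≠ 2) :
    oppO g 2 (M + 1) M 1 (DeltaOB g M)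
      (Finsupp.single (fun p : Fin 2 => if (p : ℕ) = 0 then OCell.v else OCell.X) 1) =
      ∑ f : Fin M → Fin (2 * g),
        if ∀ a b : Fin M, a < b → f a < f b then
          Finsupp.single (insV f 0) 1 +
            Finsupp.single (insV (fun q => hatO (f q)) 0) 1
        else 0 := by
  rw [oppO_single, dif_pos one_lt_two]
  show Finsupp.mapDomain _ (DeltaOB g M OCell.X) = _
  rw [DeltaX_big hM, mapDomain_fsum]
  refine Finset.sum_congr rfl fun f _ => ?_
  split_ifs with hf
  · rw [Finsupp.mapDomain_add, Finsupp.mapDomain_single, Finsupp.mapDomain_single,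
      splice_vX f, splice_vX (fun q => hatO (f q))]
  · exact Finsupp.mapDomain_zero

lemma T2_piece_Xv (M : ℕ) (hM : M ≠ 2) :
    oppO g 2 (M + 1) M 0 (DeltaOB g M)
      (Finsupp.single (fun p : Fin 2 => if (p : ℕ) = 0 then OCell.X else OCell.v) 1) =
      ∑ f : Fin M → Fin (2 * g),
        if ∀ a b : Fin M, a < b → f a < f b then
          Finsupp.single (insV f M) 1 +
            Finsupp.single (insV (fun q => hatO (f q)) M) 1
        else 0 := by
  rw [oppO_single, dif_pos two_pos]
  show Finsupp.mapDomain _ (DeltaOB g M OCell.X) = _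
  rw [DeltaX_big hM, mapDomain_fsum]
  refine Finset.sum_congr rfl fun f _ => ?_
  split_ifs with hf
  · rw [Finsupp.mapDomain_add, Finsupp.mapDomain_single, Finsupp.mapDomain_single,
      splice_Xv f, splice_Xv (fun q => hatO (f q))]
  · exact Finsupp.mapDomain_zero

lemma T2_eq (M : ℕ) (hM : M ≠ 2) :
    ∑ j ∈ Finset.range 2, oppO g 2 (M + 1) M j (DeltaOB g M) (DeltaOB g 2 OCell.X) =
      ∑ f : Fin M → Fin (2 * g),
        if ∀ a b : Fin M, a < b → f a < f b then WtO f else 0 := by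
  rw [Finset.sum_range_succ, Finset.sum_range_one, DeltaX_2']
  rw [map_add, map_add, map_add, map_add, map_sum, map_sum]
  have hvX0 : oppO g 2 (M + 1) M 0 (DeltaOB g M)
      (Finsupp.single (fun p : Fin 2 => if (p : ℕ) = 0 then OCell.v else OCell.X) 1) = 0 := by
    rw [oppO_single, dif_pos two_pos]
    show Finsupp.mapDomain _ (DeltaOB g M OCell.v) = _
    rw [Delta_ne2_v hM, Finsupp.mapDomain_zero]
  have hXv1 : oppO g 2 (M + 1) M 1 (DeltaOB g M)
      (Finsupp.single (fun p : Fin 2 => if (p : ℕ) = 0 then OCell.X else OCell.v) 1) = 0 := by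
    rw [oppO_single, dif_pos one_lt_two]
    show Finsupp.mapDomain _ (DeltaOB g M OCell.v) = _
    rw [Delta_ne2_v hM, Finsupp.mapDomain_zero]
  have hedge : ∀ (jj : ℕ) (t : Fin g), jj < 2 →
      oppO g 2 (M + 1) M jj (DeltaOB g M)
        (Finsupp.single (fun p : Fin 2 =>
            if (p : ℕ) = 0 then OCell.e ⟨2 * (t : ℕ), by have := t.isLt; omega⟩
            else OCell.e ⟨2 * (t : ℕ) + 1, by have := t.isLt; omega⟩) 1 +
          Finsupp.single (fun p : Fin 2 =>
            if (p : ℕ) = 0 then OCell.e ⟨2 * (t : ℕ) + 1, by have := t.isLt; omega⟩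
            else OCell.e ⟨2 * (t : ℕ), by have := t.isLt; omega⟩) 1) = 0 := by
    intro jj t hjj
    rw [map_add, oppO_single, oppO_single, dif_pos hjj, dif_pos hjj]
    split_ifs <;> simp [Delta_ne2_e hM]
  rw [hvX0, hXv1, T2_piece_vX M hM, T2_piece_Xv M hM]
  rw [Finset.sum_congr rfl fun t _ => hedge 0 t two_pos,
    Finset.sum_congr rfl fun t _ => hedge 1 t one_lt_two]
  simp only [Finset.sum_const_zero, add_zero, zero_add]
  rw [← Finset.sum_add_distrib]
  refine Finset.sum_congr rfl fun f _ => ?_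
  split_ifs with hf
  · unfold WtO; abel
  · rw [add_zero]


def T3 (a b c : OCell g) : TO g 3 :=
  Finsupp.single (fun q : Fin 3 => if (q : ℕ) = 0 then a else if (q : ℕ) = 1 then b else c) 1

lemma key30 (y z : Fin 2 → OCell g) :
    Finsupp.single (spliceO (g := g) 3 0 y z) (1 : ZMod 2) = T3 (z 0) (z 1) (y 1) := by
  unfold T3
  congr 1
  funext q
  fin_cases q <;> rfl

lemma key31 (y z : Fin 2 → OCell g) :
    Finsupp.single (spliceO (g := g) 3 1 y z) (1 : ZMod 2) = T3 (y 0) (z 0) (z 1) := by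
  unfold T3
  congr 1
  funext q
  fin_cases q <;> rfl

lemma Dv2 : DeltaOB g 2 (OCell.v : OCell g) = Finsupp.single (fun _ : Fin 2 => OCell.v) 1 := by
  simp [DeltaOB]

lemma De2 (i : Fin (2 * g)) :
    DeltaOB g 2 (OCell.e i : OCell g) =
      Finsupp.single (fun p : Fin 2 => if (p : ℕ) = 0 then OCell.v else OCell.e i) 1 +
        Finsupp.single (fun p : Fin 2 => if (p : ℕ) = 0 then OCell.e i else OCell.v) 1 := by
  simp [DeltaOB]

lemma opp3_single (jj : ℕ) (hjj : jj < 2) (y : Fin 2 → OCell g) :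
    oppO g 2 3 2 jj (DeltaOB g 2) (Finsupp.single y 1) =
      Finsupp.mapDomain (spliceO 3 jj y) (DeltaOB g 2 (y ⟨jj, hjj⟩)) := by
  rw [oppO_single, dif_pos hjj]

lemma coassoc_swap (c : OCell g) :
    oppO g 2 3 2 0 (DeltaOB g 2) (DeltaOB g 2 c) =
      oppO g 2 3 2 1 (DeltaOB g 2) (DeltaOB g 2 c) := by
  cases c with
  | v =>
      simp only [Dv2, opp3_single 0 two_pos, opp3_single 1 one_lt_two, Dv2,
        Finsupp.mapDomain_single, key30, key31]
  | e i =>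
      simp only [De2, map_add, opp3_single 0 two_pos, opp3_single 1 one_lt_two]
      simp only [Fin.mk_one, Fin.isValue, Fin.val_one, Fin.val_zero, one_ne_zero, reduceIte,
        Dv2, De2, Finsupp.mapDomain_single, Finsupp.mapDomain_add, key30, key31]
      abel
  | X =>
      simp only [DeltaX_2', map_add, map_sum, opp3_single 0 two_pos, opp3_single 1 one_lt_two]
      simp only [Fin.mk_one, Fin.isValue, Fin.val_one, Fin.val_zero, one_ne_zero, reduceIte,
        Dv2, De2, DeltaX_2', Finsupp.mapDomain_single, Finsupp.mapDomain_add, mapDomain_fsum,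
        key30, key31, Finset.sum_add_distrib]
      abel


lemma coassoc3 (c : OCell g) :
    ∑ j ∈ Finset.range 2, oppO g 2 3 2 j (DeltaOB g 2) (DeltaOB g 2 c) = 0 := by
  rw [Finset.sum_range_succ, Finset.sum_range_one, coassoc_swap c]
  exact add_self_TO _

lemma main_key (k : ℕ) (hk : 2 ≤ k) (c : OCell g) :
    ∑ i ∈ Finset.Icc 1 (k - 2), ∑ j ∈ Finset.range (k - i),
      oppO g (k - i) k (i + 1) j (DeltaOB g (i + 1)) (DeltaOB g (k - i) c) = 0 := by
  rcases Nat.lt_or_ge k 4 with h4 | h4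
  · interval_cases k
    · simp
    · rw [show Finset.Icc 1 (3 - 2) = {1} from Finset.Icc_self 1, Finset.sum_singleton]
      exact coassoc3 c
  · obtain ⟨m, rfl⟩ : ∃ m, k = m + 4 := ⟨k - 4, by omega⟩
    cases c with
    | v =>
        refine Finset.sum_eq_zero fun i hi => Finset.sum_eq_zero fun j _ => ?_
        rw [Finset.mem_Icc] at hi
        exact cell_zero (m + 4) (m + 4 - i) (i + 1) j (fun hMi => by omega) (fun _ => trivial)
          OCell.v (fun h => by cases h)
    | e i0 =>
        refine Finset.sum_eq_zero fun i hi => Finset.sum_eq_zero fun j _ => ?_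
        rw [Finset.mem_Icc] at hi
        exact cell_zero (m + 4) (m + 4 - i) (i + 1) j (fun hMi => by omega) (fun _ => trivial)
          (OCell.e i0) (fun h => by cases h)
    | X =>
        have hsplit : Finset.Icc 1 (m + 4 - 2) =
            insert 1 (insert (m + 2) (Finset.Icc 2 (m + 1))) := by
          ext a
          simp only [Finset.mem_Icc, Finset.mem_insert]
          omega
        have h1 : (1 : ℕ) ∉ insert (m + 2) (Finset.Icc 2 (m + 1)) := by
          simp only [Finset.mem_insert, Finset.mem_Icc]
          omega
        have h2 : (m + 2) ∉ Finset.Icc 2 (m + 1) := by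
          simp only [Finset.mem_Icc]
          omega
        rw [hsplit, Finset.sum_insert h1, Finset.sum_insert h2]
        have hmid : ∑ i ∈ Finset.Icc 2 (m + 1), ∑ j ∈ Finset.range (m + 4 - i),
            oppO g (m + 4 - i) (m + 4) (i + 1) j (DeltaOB g (i + 1))
              (DeltaOB g (m + 4 - i) OCell.X) = 0 := by
          refine Finset.sum_eq_zero fun i hi => Finset.sum_eq_zero fun j _ => ?_
          rw [Finset.mem_Icc] at hi
          exact middle_zero (m + 4) (m + 4 - i) (i + 1) j (by omega) (by omega)
        rw [hmid, add_zero]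
        have e1 : ∑ j ∈ Finset.range (m + 4 - 1),
            oppO g (m + 4 - 1) (m + 4) (1 + 1) j (DeltaOB g (1 + 1))
              (DeltaOB g (m + 4 - 1) OCell.X) =
            ∑ f : Fin (m + 3) → Fin (2 * g),
              if ∀ a b : Fin (m + 3), a < b → f a < f b then WtO f else 0 :=
          T1_eq (m + 3) (by omega)
        have hsub : m + 4 - (m + 2) = 2 := by omega
        rw [e1, hsub]
        have e2 : ∑ j ∈ Finset.range 2,
            oppO g 2 (m + 4) (m + 2 + 1) j (DeltaOB g (m + 2 + 1))
              (DeltaOB g 2 OCell.X) =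
            ∑ f : Fin (m + 3) → Fin (2 * g),
              if ∀ a b : Fin (m + 3), a < b → f a < f b then WtO f else 0 :=
          T2_eq (m + 3) (by omega)
        rw [e2]
        exact add_self_TO _

theorem orientable_surface_Ainfinity_coalgebra' (g : ℕ) (hg : 1 ≤ g) :
    ∀ k : ℕ, 2 ≤ k →
      ∑ i ∈ Finset.Icc 1 (k - 2), ∑ j ∈ Finset.range (k - i),
        (oppO g (k - i) k (i + 1) j (DeltaOB g (i + 1))) ∘ₗ (DmapO g (k - i)) = 0 := by
  intro k hk
  refine Finsupp.lhom_ext fun x c => ?_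
  simp only [LinearMap.sum_apply, LinearMap.comp_apply, LinearMap.zero_apply]
  have hD : ∀ m : ℕ, DmapO g m (Finsupp.single x c) = c • DeltaOB g m (x 0) := fun m => by
    simp [DmapO, Finsupp.linearCombination_single]
  simp only [hD, map_smul, ← Finset.smul_sum]
  rw [main_key k hk (x 0), smul_zero]

end AuxAinf

/-- For every `k ≥ 2` the operations `Δ₂, Δ₃, …` on the mod-2
chains/homology of the closed compact orientable surface of genus `g` (with zero
differential) satisfy the `A_∞`-coalgebra relation in arity `k`:
`Σ_{i=1}^{k−2} Σ_{j=0}^{k−i−1} (1^{⊗j} ⊗ Δ_{i+1} ⊗ 1^{⊗(k−i−j−1)}) ∘ Δ_{k−i} = 0`;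
thus `(M, 0, Δ₂, Δ₃, …)` is an `A_∞`-coalgebra over `ℤ/2ℤ`. -/
theorem orientable_surface_Ainfinity_coalgebra (g : ℕ) (hg : 1 ≤ g) :
    ∀ k : ℕ, 2 ≤ k →
      ∑ i ∈ Finset.Icc 1 (k - 2), ∑ j ∈ Finset.range (k - i),
        (oppO g (k - i) k (i + 1) j (DeltaOB g (i + 1))) ∘ₗ (DmapO g (k - i)) = 0 :=
  orientable_surface_Ainfinity_coalgebra' g hg
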